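/- For z > 0, define ϕ(z) = (1 − e^{−z})/(1 + e^{z}) and ψ(z) = e^{z} + 2·ln(e^{z} − 1), and set F₁(z) = √(ϕ(z))·sin(ψ(z)), F₂(z) = √(ϕ(z))·cos(ψ(z)). Then for all z > 0: (a) 0 < ϕ(z) < 1; (b) ϕ(z)·ψ′(z) = 1; and (c) F₁ and F₂ are differentiable with F₁(z)F₂′(z) − F₁′(z)F₂(z) = −1. -/

import Mathlib

/-- ϕ(z) = (1 − e^{−z})/(1 + e^{z}), from control law (12) of the paper. -/
noncomputable def phiES (z : ℝ) : ℝ := (1 - Real.exp (-z)) / (1 + Real.exp z)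

/-- ψ(z) = e^{z} + 2·ln(e^{z} − 1), from control law (12) of the paper. -/
noncomputable def psiES (z : ℝ) : ℝ := Real.exp z + 2 * Real.log (Real.exp z - 1)

/-- F₁(z) = √(ϕ(z))·sin(ψ(z)). -/
noncomputable def Fes₁ (z : ℝ) : ℝ := Real.sqrt (phiES z) * Real.sin (psiES z)

/-- F₂(z) = √(ϕ(z))·cos(ψ(z)). -/
noncomputable def Fes₂ (z : ℝ) : ℝ := Real.sqrt (phiES z) * Real.cos (psiES z)

/-- For all z > 0: (a) 0 < ϕ(z) < 1; (b) ϕ(z)·ψ′(z) = 1; (c) F₁ and F₂ are differentiable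
and satisfy the defining Wronskian relation F₁F₂′ − F₁′F₂ = −1. -/
theorem stmt18 :
    ∀ z : ℝ, 0 < z →
      (0 < phiES z ∧ phiES z < 1) ∧
      phiES z * deriv psiES z = 1 ∧
      (DifferentiableAt ℝ Fes₁ z ∧ DifferentiableAt ℝ Fes₂ z ∧
        Fes₁ z * deriv Fes₂ z - deriv Fes₁ z * Fes₂ z = -1) := by
  intro z hz
  have he1 : 1 < Real.exp z := by rw [← Real.exp_zero]; exact Real.exp_lt_exp.mpr hz
  have hden : (0:ℝ) < 1 + Real.exp z := by positivity
  have hexneg : Real.exp (-z) < 1 := by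
    rw [Real.exp_lt_one_iff]; linarith
  have hφpos : 0 < phiES z := div_pos (by linarith) hden
  have hφlt : phiES z < 1 := by
    rw [phiES, div_lt_one hden]
    have := Real.exp_pos (-z)
    linarith
  -- derivative of psiES
  have hψ : HasDerivAt psiES (Real.exp z + 2 * (Real.exp z / (Real.exp z - 1))) z := by
    have h1 := Real.hasDerivAt_exp z
    have h2 : HasDerivAt (fun x => Real.log (Real.exp x - 1))
        (Real.exp z / (Real.exp z - 1)) z := by
      have := ((Real.hasDerivAt_exp z).sub_const 1).log (by linarith)
      simpa using this
    exact h1.add (h2.const_mul 2)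
  -- derivative of phiES
  have hnum' : HasDerivAt (fun x => 1 - Real.exp (-x)) (Real.exp (-z)) z := by
    have h := (Real.hasDerivAt_exp (-z)).comp z ((hasDerivAt_id z).neg)
    have := (hasDerivAt_const z (1:ℝ)).sub h
    exact this.congr_deriv (by ring)
  have hden' : HasDerivAt (fun x => 1 + Real.exp x) (Real.exp z) z := by
    exact (Real.hasDerivAt_exp z).const_add 1
  set p' : ℝ := (Real.exp (-z) * (1 + Real.exp z) - (1 - Real.exp (-z)) * Real.exp z) /
      (1 + Real.exp z) ^ 2 with hp'
  have hφ : HasDerivAt phiES p' z := hnum'.div hden' (ne_of_gt hden)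
  have hs : HasDerivAt (fun x => Real.sqrt (phiES x)) (p' / (2 * Real.sqrt (phiES z))) z :=
    hφ.sqrt (ne_of_gt hφpos)
  set ψ' : ℝ := Real.exp z + 2 * (Real.exp z / (Real.exp z - 1)) with hψ'def
  set s : ℝ := Real.sqrt (phiES z) with hsdef
  set q : ℝ := p' / (2 * s) with hqdef
  have hF1 : HasDerivAt Fes₁ (q * Real.sin (psiES z) + s * (Real.cos (psiES z) * ψ')) z :=
    hs.mul hψ.sin
  have hF2 : HasDerivAt Fes₂ (q * Real.cos (psiES z) + s * (-Real.sin (psiES z) * ψ')) z :=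
    hs.mul hψ.cos
  have hφψ : phiES z * ψ' = 1 := by
    have hE : Real.exp (-z) = (Real.exp z)⁻¹ := Real.exp_neg z
    rw [phiES, hψ'def, hE]
    have h1 : Real.exp z - 1 ≠ 0 := by linarith
    have h2 : Real.exp z ≠ 0 := by positivity
    field_simp
    ring
  refine ⟨⟨hφpos, hφlt⟩, by rw [hψ.deriv]; exact hφψ, hF1.differentiableAt,
    hF2.differentiableAt, ?_⟩
  rw [hF1.deriv, hF2.deriv]
  have hs2 : s * s = phiES z := Real.mul_self_sqrt hφpos.le
  have hsc : Real.sin (psiES z) ^ 2 + Real.cos (psiES z) ^ 2 = 1 := Real.sin_sq_add_cos_sq _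
  have : Fes₁ z * (q * Real.cos (psiES z) + s * (-Real.sin (psiES z) * ψ')) -
      (q * Real.sin (psiES z) + s * (Real.cos (psiES z) * ψ')) * Fes₂ z
      = -(phiES z * ψ') := by
    rw [Fes₁, Fes₂, ← hsdef, ← hs2]
    linear_combination (-(s * s * ψ')) * hsc
  rw [this, hφψ]
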